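/- Let g, k ≥ 1 with g ≥ k + ⌈log₂ k⌉, let N ≥ 1, and let {H_n} be the PLRS generated by the coefficients [1, ..., 1, 0, ..., 0, N] consisting of g ones, then k zeros, then N (so L = g + k + 1). Then {H_n} is complete if and only if 1 ≤ N ≤ 2^{k+1} − 1. -/

import Mathlib

/-- `H` (indexed from 1) is the Positive Linear Recurrence Sequence generated by the
coefficients `c 1, …, c L` (nonnegative integers with `L`, `c 1`, `c L` positive):
`H 1 = 1`, `H (n+1) = c 1 * H n + ⋯ + c n * H 1 + 1` for `1 ≤ n < L`, and
`H (n+1) = c 1 * H n + ⋯ + c L * H (n+1-L)` for `n ≥ L`. -/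
def IsPLRS (L : ℕ) (c : ℕ → ℕ) (H : ℕ → ℕ) : Prop :=
  0 < L ∧ 0 < c 1 ∧ 0 < c L ∧ H 1 = 1 ∧
  (∀ n, 1 ≤ n → n < L →
    H (n + 1) = (∑ j ∈ Finset.Icc 1 n, c j * H (n + 1 - j)) + 1) ∧
  (∀ n, L ≤ n →
    H (n + 1) = ∑ j ∈ Finset.Icc 1 L, c j * H (n + 1 - j))

/-- A sequence (indexed from 1) is complete if every positive integer is a sum of
terms of the sequence over a finite set of distinct indices (each ≥ 1). -/
def SeqComplete (H : ℕ → ℕ) : Prop :=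
  ∀ m : ℕ, 0 < m → ∃ S : Finset ℕ, (∀ i ∈ S, 1 ≤ i) ∧ m = ∑ i ∈ S, H i

/-- The `n`th Brown's gap of a sequence: `B_{H,n} = 1 + ∑_{i=1}^{n-1} H i − H n`. -/
def BrownGap (H : ℕ → ℕ) (n : ℕ) : ℤ :=
  1 + (∑ i ∈ Finset.Icc 1 (n - 1), (H i : ℤ)) - (H n : ℤ)


lemma aux_win {M : Type*} [AddCommMonoid M] (f : ℕ → M) (a n : ℕ) (h : a ≤ n) :
    ∑ j ∈ Finset.Icc 1 a, f (n + 1 - j) = ∑ i ∈ Finset.Ioc (n - a) n, f i := by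
  apply Finset.sum_nbij' (fun j => n + 1 - j) (fun i => n + 1 - i)
  all_goals intro x hx <;> simp only [Finset.mem_Icc, Finset.mem_Ioc] at hx ⊢
  all_goals first | rfl | omega

lemma aux_win' {M : Type*} [AddCommMonoid M] (f : ℕ → M) (a n : ℕ) (h : a < n) :
    ∑ j ∈ Finset.Icc 1 a, f (n - j) = ∑ i ∈ Finset.Ioc (n - 1 - a) (n - 1), f i := by
  apply Finset.sum_nbij' (fun j => n - j) (fun i => n - i)
  all_goals intro x hx <;> simp only [Finset.mem_Icc, Finset.mem_Ioc] at hx ⊢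
  all_goals first | rfl | omega

lemma aux_geom (n : ℕ) : ∑ i ∈ Finset.Ioc 0 n, 2 ^ (i - 1) = 2 ^ n - 1 := by
  induction n with
  | zero => simp
  | succ n ih =>
    rw [Finset.sum_Ioc_succ_top (Nat.zero_le _), ih]
    have h1 : 1 ≤ 2 ^ n := Nat.one_le_two_pow
    have h2 : 2 ^ (n + 1) = 2 * 2 ^ n := by rw [pow_succ]; ring
    simp only [Nat.add_sub_cancel]
    omega

/-- The key nonnegativity certificate. -/
def auxC (k : ℕ) (H : ℕ → ℕ) (m : ℕ) : ℤ :=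
  (H (m + k + 1) : ℤ) - (2 ^ (k + 1) - 1) * ((H (m + 1) : ℤ) - (H m : ℤ))



lemma brown_complete (H : ℕ → ℕ) (h1 : H 1 = 1) (hpos : ∀ n, 1 ≤ n → 1 ≤ H n)
    (hb : ∀ n, 1 ≤ n → H (n + 1) ≤ 1 + ∑ i ∈ Finset.Icc 1 n, H i) :
    SeqComplete H := by
  have key : ∀ n m, m ≤ ∑ i ∈ Finset.Icc 1 n, H i →
      ∃ T ⊆ Finset.Icc 1 n, m = ∑ i ∈ T, H i := by
    intro n
    induction n with
    | zero =>
      intro m hm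
      simp only [Finset.Icc_eq_empty_of_lt (by norm_num : (1:ℕ) > 0), Finset.sum_empty] at hm
      exact ⟨∅, Finset.empty_subset _, by simp; omega⟩
    | succ n ih =>
      intro m hm
      have hsub : Finset.Icc 1 n ⊆ Finset.Icc 1 (n + 1) := by
        apply Finset.Icc_subset_Icc_right; omega
      by_cases hc : m ≤ ∑ i ∈ Finset.Icc 1 n, H i
      · obtain ⟨T, hT, hTs⟩ := ih m hc
        exact ⟨T, hT.trans hsub, hTs⟩
      · push_neg at hc
        have hb' : H (n + 1) ≤ 1 + ∑ i ∈ Finset.Icc 1 n, H i := by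
          rcases Nat.eq_zero_or_pos n with rfl | hn
          · simp [h1]
          · exact hb n hn
        have hsum : ∑ i ∈ Finset.Icc 1 (n+1), H i
            = ∑ i ∈ Finset.Icc 1 n, H i + H (n+1) := by
          rw [Finset.sum_Icc_succ_top (by omega)]
        have hge : H (n + 1) ≤ m := by omega
        obtain ⟨T, hT, hTs⟩ := ih (m - H (n + 1)) (by omega)
        refine ⟨insert (n + 1) T, ?_, ?_⟩
        · intro x hx
          rcases Finset.mem_insert.mp hx with rfl | hx
          · simp
          · exact hsub (hT hx)
        · have hnotin : (n + 1) ∉ T := by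
            intro hmem
            have := hT hmem
            simp only [Finset.mem_Icc] at this
            omega
          rw [Finset.sum_insert hnotin]
          omega
  intro m hm
  have hcard : m ≤ ∑ i ∈ Finset.Icc 1 m, H i := by
    calc m = ∑ i ∈ Finset.Icc 1 m, 1 := by simp
    _ ≤ ∑ i ∈ Finset.Icc 1 m, H i := by
        apply Finset.sum_le_sum
        intro i hi
        exact hpos i (Finset.mem_Icc.mp hi).1
  obtain ⟨T, hT, hTs⟩ := key m m hcard
  exact ⟨T, fun i hi => (Finset.mem_Icc.mp (hT hi)).1, hTs⟩

lemma brown_incomplete (H : ℕ → ℕ) (hmono : ∀ a b, 1 ≤ a → a ≤ b → H a ≤ H b)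
    (n : ℕ) (hn : 1 ≤ n) (hgap : 1 + ∑ i ∈ Finset.Icc 1 n, H i < H (n + 1)) :
    ¬ SeqComplete H := by
  intro hcomp
  obtain ⟨S, hS1, hSsum⟩ := hcomp (1 + ∑ i ∈ Finset.Icc 1 n, H i) (by omega)
  by_cases hall : ∀ i ∈ S, i ≤ n
  · have hsub : S ⊆ Finset.Icc 1 n := by
      intro i hi; exact Finset.mem_Icc.mpr ⟨hS1 i hi, hall i hi⟩
    have := Finset.sum_le_sum_of_subset hsub (f := H)
    omega
  · push_neg at hall
    obtain ⟨i, hiS, hni⟩ := hall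
    have h1 : H (n + 1) ≤ H i := hmono (n + 1) i (by omega) (by omega)
    have h2 : H i ≤ ∑ j ∈ S, H j :=
      Finset.single_le_sum (fun j _ => Nat.zero_le _) hiS
    omega

theorem stmt6 (g k N : ℕ) (hg : 1 ≤ g) (hk : 1 ≤ k)
    (hgk : k + Nat.clog 2 k ≤ g) (hN : 1 ≤ N) (H : ℕ → ℕ)
    (hH : IsPLRS (g + k + 1)
      (fun i => if i ≤ g then 1 else if i = g + k + 1 then N else 0) H) :
    SeqComplete H ↔ (1 ≤ N ∧ N ≤ 2 ^ (k + 1) - 1) := by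
  obtain ⟨-, -, -, h1, hrec1, hrec2⟩ := hH
  simp only [] at hrec1 hrec2
  have hkg : k ≤ g := le_trans (Nat.le_add_right _ _) hgk
  -- k ≤ 2 ^ (g - k)
  have hk2 : k ≤ 2 ^ (g - k) := by
    calc k ≤ 2 ^ Nat.clog 2 k := Nat.le_pow_clog (by norm_num) k
    _ ≤ 2 ^ (g - k) := Nat.pow_le_pow_right (by norm_num) (by omega)
  -- three clean forms of the recurrence
  have csum1 : ∀ n, 1 ≤ n → n ≤ g →
      H (n + 1) = (∑ i ∈ Finset.Ioc 0 n, H i) + 1 := by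
    intro n hn hng
    rw [hrec1 n hn (by omega)]
    congr 1
    calc ∑ j ∈ Finset.Icc 1 n, (if j ≤ g then 1 else if j = g + k + 1 then N else 0) * H (n + 1 - j)
        = ∑ j ∈ Finset.Icc 1 n, H (n + 1 - j) := by
          apply Finset.sum_congr rfl
          intro j hj
          simp only [Finset.mem_Icc] at hj
          rw [if_pos (by omega), one_mul]
    _ = ∑ i ∈ Finset.Ioc (n - n) n, H i := aux_win H n n le_rfl
    _ = ∑ i ∈ Finset.Ioc 0 n, H i := by rw [Nat.sub_self]
  have csum2 : ∀ n, g ≤ n → n < g + k + 1 →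
      H (n + 1) = (∑ i ∈ Finset.Ioc (n - g) n, H i) + 1 := by
    intro n hgn hnk
    rw [hrec1 n (by omega) hnk]
    congr 1
    have hsplit : ∑ j ∈ Finset.Icc 1 n, (if j ≤ g then 1 else if j = g + k + 1 then N else 0) * H (n + 1 - j)
        = ∑ j ∈ Finset.Ioc 0 g, (if j ≤ g then 1 else if j = g + k + 1 then N else 0) * H (n + 1 - j)
        + ∑ j ∈ Finset.Ioc g n, (if j ≤ g then 1 else if j = g + k + 1 then N else 0) * H (n + 1 - j) := by
      rw [(show ∀ X : ℕ, Finset.Icc 1 X = Finset.Ioc 0 X from fun X => by rw [← Finset.Icc_add_one_left_eq_Ioc]; rfl), (Finset.sum_Ioc_consecutive _ (Nat.zero_le g) hgn)]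
    rw [hsplit]
    have hz : ∑ j ∈ Finset.Ioc g n, (if j ≤ g then 1 else if j = g + k + 1 then N else 0) * H (n + 1 - j) = 0 := by
      apply Finset.sum_eq_zero
      intro j hj
      simp only [Finset.mem_Ioc] at hj
      rw [if_neg (by omega), if_neg (by omega), zero_mul]
    rw [hz, add_zero, ← (show ∀ X : ℕ, Finset.Icc 1 X = Finset.Ioc 0 X from fun X => by rw [← Finset.Icc_add_one_left_eq_Ioc]; rfl)]
    calc ∑ j ∈ Finset.Icc 1 g, (if j ≤ g then 1 else if j = g + k + 1 then N else 0) * H (n + 1 - j)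
        = ∑ j ∈ Finset.Icc 1 g, H (n + 1 - j) := by
          apply Finset.sum_congr rfl
          intro j hj
          simp only [Finset.mem_Icc] at hj
          rw [if_pos (by omega), one_mul]
    _ = ∑ i ∈ Finset.Ioc (n - g) n, H i := aux_win H g n hgn
  have csum3 : ∀ n, g + k + 1 ≤ n →
      H (n + 1) = (∑ i ∈ Finset.Ioc (n - g) n, H i) + N * H (n - g - k) := by
    intro n hn
    rw [hrec2 n hn]
    have hsplit : ∑ j ∈ Finset.Icc 1 (g + k + 1), (if j ≤ g then 1 else if j = g + k + 1 then N else 0) * H (n + 1 - j)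
        = ∑ j ∈ Finset.Ioc 0 g, (if j ≤ g then 1 else if j = g + k + 1 then N else 0) * H (n + 1 - j)
        + ∑ j ∈ Finset.Ioc g (g + k + 1), (if j ≤ g then 1 else if j = g + k + 1 then N else 0) * H (n + 1 - j) := by
      rw [(show ∀ X : ℕ, Finset.Icc 1 X = Finset.Ioc 0 X from fun X => by rw [← Finset.Icc_add_one_left_eq_Ioc]; rfl), (Finset.sum_Ioc_consecutive _ (Nat.zero_le g) (by omega))]
    rw [hsplit]
    congr 1
    · rw [← (show ∀ X : ℕ, Finset.Icc 1 X = Finset.Ioc 0 X from fun X => by rw [← Finset.Icc_add_one_left_eq_Ioc]; rfl)]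
      calc ∑ j ∈ Finset.Icc 1 g, (if j ≤ g then 1 else if j = g + k + 1 then N else 0) * H (n + 1 - j)
          = ∑ j ∈ Finset.Icc 1 g, H (n + 1 - j) := by
            apply Finset.sum_congr rfl
            intro j hj
            simp only [Finset.mem_Icc] at hj
            rw [if_pos (by omega), one_mul]
      _ = ∑ i ∈ Finset.Ioc (n - g) n, H i := aux_win H g n (by omega)
    · rw [Finset.sum_eq_single_of_mem (g + k + 1) (by simp only [Finset.mem_Ioc]; omega)
        (by intro b hb hbne; simp only [Finset.mem_Ioc] at hb; rw [if_neg (by omega), if_neg hbne, zero_mul])]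
      rw [if_neg (by omega), if_pos rfl]
      congr 2
      omega
  -- monotonicity and positivity
  have mono1 : ∀ n, 1 ≤ n → H n ≤ H (n + 1) := by
    intro n hn
    by_cases hng : n ≤ g
    · rw [csum1 n hn hng]
      have : H n ≤ ∑ i ∈ Finset.Ioc 0 n, H i :=
        Finset.single_le_sum (fun i _ => Nat.zero_le _) (by simp only [Finset.mem_Ioc]; omega)
      omega
    · by_cases hnk : n < g + k + 1
      · rw [csum2 n (by omega) hnk]
        have : H n ≤ ∑ i ∈ Finset.Ioc (n - g) n, H i :=
          Finset.single_le_sum (fun i _ => Nat.zero_le _) (by simp only [Finset.mem_Ioc]; omega)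
        omega
      · rw [csum3 n (by omega)]
        have : H n ≤ ∑ i ∈ Finset.Ioc (n - g) n, H i :=
          Finset.single_le_sum (fun i _ => Nat.zero_le _) (by simp only [Finset.mem_Ioc]; omega)
        omega
  have monole : ∀ a b, 1 ≤ a → a ≤ b → H a ≤ H b := by
    intro a b ha hab
    induction b, hab using Nat.le_induction with
    | base => exact le_rfl
    | succ b hb ih => exact ih.trans (mono1 b (by omega))
  have hposH : ∀ n, 1 ≤ n → 1 ≤ H n := fun n hn => h1 ▸ monole 1 n le_rfl hn

  -- powers of two regime
  have F1 : ∀ i, i ≤ g + 1 → 1 ≤ i → H i = 2 ^ (i - 1) := by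
    intro i
    induction i using Nat.strong_induction_on with
    | _ i ih =>
      intro hle hge
      match i, hge with
      | 1, _ => simpa using h1
      | (n+2), _ =>
        have hrec := csum1 (n+1) (by omega) (by omega)
        have hsum : ∑ i ∈ Finset.Ioc 0 (n+1), H i = ∑ i ∈ Finset.Ioc 0 (n+1), 2 ^ (i-1) := by
          apply Finset.sum_congr rfl
          intro j hj
          simp only [Finset.mem_Ioc] at hj
          exact ih j (by omega) (by omega) (by omega)
        rw [hsum, aux_geom] at hrec
        have h2 : 1 ≤ 2 ^ (n+1) := Nat.one_le_two_pow
        have h3 : (n+2) - 1 = n + 1 := by omega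
        rw [show n + 2 = n + 1 + 1 from rfl, hrec, h3]
        omega
  have SHg : ∀ n, n ≤ g + 1 → ∑ i ∈ Finset.Ioc 0 n, H i = 2 ^ n - 1 := by
    intro n hn
    calc ∑ i ∈ Finset.Ioc 0 n, H i = ∑ i ∈ Finset.Ioc 0 n, 2 ^ (i-1) := by
          apply Finset.sum_congr rfl
          intro j hj
          simp only [Finset.mem_Ioc] at hj
          exact F1 j (by omega) (by omega)
    _ = 2 ^ n - 1 := aux_geom n
  -- middle regime
  have F2 : ∀ t, 1 ≤ t → t ≤ k → H (g + 1 + t) = 2 ^ (t - 1) * (2 ^ (g+1) - t) := by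
    intro t ht
    induction t, ht using Nat.le_induction with
    | base =>
      intro _
      have e1 := csum2 (g+1) (by omega) (by omega)
      rw [show g + 1 - g = 1 from by omega] at e1
      have e2 := Finset.sum_Ioc_consecutive H (Nat.zero_le 1) (show (1:ℕ) ≤ g + 1 by omega)
      have e4 : ∑ i ∈ Finset.Ioc 0 1, H i = H 1 := by simp
      have e3 := SHg (g+1) le_rfl
      have h2 : 2 ≤ 2 ^ (g+1) := by
        calc (2:ℕ) = 2 ^ 1 := by norm_num
        _ ≤ 2 ^ (g+1) := Nat.pow_le_pow_right (by norm_num) (by omega)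
      rw [show (1:ℕ) - 1 = 0 from rfl, pow_zero, one_mul]
      omega
    | succ t ht iht =>
      intro htk
      obtain ⟨s, rfl⟩ : ∃ s, t = s + 1 := ⟨t - 1, by omega⟩
      have hf := iht (by omega)
      have e1 := csum2 (g+1+(s+1)) (by omega) (by omega)
      rw [show g+1+(s+1) - g = s+1+1 from by omega] at e1
      have e2 := csum2 (g+(s+1)) (by omega) (by omega)
      rw [show g+(s+1) - g = s+1 from by omega,
          show g+(s+1)+1 = g+1+(s+1) from by omega] at e2
      have e3 := Finset.sum_Ioc_consecutive H (show s+1 ≤ s+1+1 by omega) (show s+1+1 ≤ g+1+(s+1) by omega)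
      have e4 : ∑ i ∈ Finset.Ioc (s+1) (s+1+1), H i = H (s+1+1) := by simp
      have e5 := Finset.sum_Ioc_succ_top (show s+1 ≤ g+(s+1) by omega) H
      rw [show g+(s+1)+1 = g+1+(s+1) from by omega] at e5
      have e6 : H (s+1+1) = 2 ^ (s+1) := by
        have := F1 (s+1+1) (by omega) (by omega)
        simpa using this
      -- H (g+1+(s+1)+1) + 2^(s+1) = 2 * H (g+1+(s+1))
      have hval : H (g+1+(s+1)+1) + 2 ^ (s+1) = 2 * H (g+1+(s+1)) := by omega
      have hP : s + 1 + 1 + 1 ≤ 2 ^ (g+1) := by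
        have := Nat.lt_two_pow_self (n := (g+1))
        omega
      have hA : 2 * (2 ^ s * (2 ^ (g+1) - (s+1))) = 2 ^ (s+1) * (2 ^ (g+1) - (s+1)) := by
        rw [pow_succ]; ring
      have hB : 2 ^ (s+1) * (2 ^ (g+1) - (s+1)) = 2 ^ (s+1) * (2 ^ (g+1) - (s+1+1)) + 2 ^ (s+1) := by
        have hy : 2 ^ (g+1) - (s+1) = (2 ^ (g+1) - (s+1+1)) + 1 := by omega
        rw [hy, Nat.mul_add, mul_one]
      rw [show g+1+(s+1+1) = g+1+(s+1)+1 from by omega,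
          show s+1+1-1 = s+1 from by omega]
      have hfs : H (g+1+(s+1)) = 2 ^ s * (2 ^ (g+1) - (s+1)) := by
        rw [hf]; norm_num
      omega
  -- the step over the gap
  have F3 : H (g+k+2) + 2 ^ k + 1 = 2 * H (g+k+1) + N := by
    have e1 := csum3 (g+k+1) le_rfl
    rw [show g+k+1-g-k = 1 from by omega, show g+k+1-g = k+1 from by omega, h1, mul_one,
        show g+k+1+1 = g+k+2 from by omega] at e1
    have e2 := csum2 (g+k) (by omega) (by omega)
    rw [show g+k-g = k from by omega] at e2
    have e3 := Finset.sum_Ioc_consecutive H (show k ≤ k+1 by omega) (show k+1 ≤ g+k+1 by omega)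
    have e4 : ∑ i ∈ Finset.Ioc k (k+1), H i = H (k+1) := by simp
    have e5 := Finset.sum_Ioc_succ_top (show k ≤ g+k by omega) H
    have e6 : H (k+1) = 2 ^ k := by
      have := F1 (k+1) (by omega) (by omega)
      simpa using this
    omega

  -- integer versions
  have zc2 : ∀ n, g ≤ n → n < g + k + 1 →
      ((H (n+1) : ℤ)) = (∑ i ∈ Finset.Ioc (n-g) n, (H i : ℤ)) + 1 := by
    intro n hn1 hn2; rw [csum2 n hn1 hn2]; push_cast; ring
  have zc3 : ∀ n, g + k + 1 ≤ n →
      ((H (n+1) : ℤ)) = (∑ i ∈ Finset.Ioc (n-g) n, (H i : ℤ)) + (N:ℤ) * (H (n-g-k) : ℤ) := by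
    intro n hn; rw [csum3 n hn]; push_cast; ring
  have eRgen : ∀ m, g + 1 ≤ m → ∑ j ∈ Finset.Icc 1 g, auxC k H (m-j)
      = (∑ i ∈ Finset.Ioc (m+k-g) (m+k), (H i:ℤ))
        - (2^(k+1)-1) * ((∑ i ∈ Finset.Ioc (m-g) m, (H i:ℤ))
          - ∑ i ∈ Finset.Ioc (m-1-g) (m-1), (H i:ℤ)) := by
    intro m hm
    have w1 : ∑ j ∈ Finset.Icc 1 g, (H (m+k+1-j) : ℤ)
        = ∑ i ∈ Finset.Ioc (m+k-g) (m+k), (H i:ℤ) := aux_win (fun i => (H i : ℤ)) g (m+k) (by omega)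
    have w2 : ∑ j ∈ Finset.Icc 1 g, (H (m+1-j) : ℤ)
        = ∑ i ∈ Finset.Ioc (m-g) m, (H i:ℤ) := aux_win (fun i => (H i : ℤ)) g m (by omega)
    have w3 : ∑ j ∈ Finset.Icc 1 g, (H (m-j) : ℤ)
        = ∑ i ∈ Finset.Ioc (m-1-g) (m-1), (H i:ℤ) := aux_win' (fun i => (H i : ℤ)) g m (by omega)
    rw [← w1, ← w2, ← w3, ← Finset.sum_sub_distrib, Finset.mul_sum, ← Finset.sum_sub_distrib]
    apply Finset.sum_congr rfl
    intro j hj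
    simp only [Finset.mem_Icc] at hj
    simp only [auxC]
    rw [show m - j + k + 1 = m+k+1-j from by omega, show m - j + 1 = m+1-j from by omega]
  have Cmid : ∀ m, g + 2 ≤ m → m ≤ g + k →
      auxC k H m = (∑ j ∈ Finset.Icc 1 g, auxC k H (m-j)) + (N:ℤ) * (H (m-g) : ℤ) := by
    intro m hm1 hm2
    have e1 := zc3 (m+k) (by omega)
    rw [show m+k-g-k = m-g from by omega] at e1
    have e2 := zc2 m (by omega) (by omega)
    have e3 := zc2 (m-1) (by omega) (by omega)
    rw [show m-1+1 = m from by omega] at e3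
    rw [eRgen m (by omega)]
    simp only [auxC]
    linear_combination e1 - ((2:ℤ)^(k+1)-1) * e2 + ((2:ℤ)^(k+1)-1) * e3
  have CL : auxC k H (g+k+1) = (∑ j ∈ Finset.Icc 1 g, auxC k H (g+k+1-j))
      + (N:ℤ) * 2^k - (2^(k+1)-1) * N + ((2:ℤ)^(k+1)-1) := by
    have e1 := zc3 (g+k+1+k) (by omega)
    rw [show g+k+1+k-g-k = k+1 from by omega] at e1
    have hk1 : ((H (k+1)) : ℤ) = 2^k := by
      have hv := F1 (k+1) (by omega) (by omega)
      rw [show k+1-1 = k from by omega] at hv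
      exact_mod_cast congrArg (Nat.cast : ℕ → ℤ) hv
    rw [hk1] at e1
    have e2 := zc3 (g+k+1) le_rfl
    rw [show g+k+1-g-k = 1 from by omega, h1] at e2
    push_cast at e2
    have e3 := zc2 (g+k) (by omega) (by omega)
    have eR := eRgen (g+k+1) (by omega)
    rw [show g+k+1-1-g = g+k-g from by omega, show g+k+1-1 = g+k from by omega] at eR
    rw [eR]
    simp only [auxC]
    linear_combination e1 - ((2:ℤ)^(k+1)-1) * e2 + ((2:ℤ)^(k+1)-1) * e3
  have Cfull : ∀ m, g+k+2 ≤ m →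
      auxC k H m = (∑ j ∈ Finset.Icc 1 g, auxC k H (m-j))
        + (N:ℤ) * auxC k H (m-(g+k+1)) := by
    intro m hm
    have e1 := zc3 (m+k) (by omega)
    rw [show m+k-g-k = m-g from by omega] at e1
    have e2 := zc3 m (by omega)
    have e3 := zc3 (m-1) (by omega)
    rw [show m-1+1 = m from by omega, show m-1-g-k = m-g-k-1 from by omega] at e3
    rw [eRgen m (by omega)]
    simp only [auxC]
    rw [show m-(g+k+1)+k+1 = m-g from by omega, show m-(g+k+1)+1 = m-g-k from by omega,
        show m-(g+k+1) = m-g-k-1 from by omega]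
    linear_combination e1 - ((2:ℤ)^(k+1)-1) * e2 + ((2:ℤ)^(k+1)-1) * e3

  -- nonnegativity of the certificate
  have Cnn : (N:ℤ) ≤ 2^(k+1)-1 → ∀ m, 1 ≤ m → (0 ≤ auxC k H m ∧
      (g+2 ≤ m → m ≤ g+k → (N:ℤ) * (H (m-g):ℤ) ≤ auxC k H m)) := by
    intro hNM m
    induction m using Nat.strong_induction_on with
    | _ m ih =>
      intro hm
      by_cases hc1 : m + k ≤ g
      · -- pure doubling regime
        obtain ⟨s, rfl⟩ : ∃ s, m = s + 1 := ⟨m-1, by omega⟩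
        constructor
        · have v1 : H (s+1+k+1) = 2^(s+1+k) := by
            have hv := F1 (s+1+k+1) (by omega) (by omega)
            rw [show s+1+k+1-1 = s+1+k from by omega] at hv; exact hv
          have v2 : H (s+1+1) = 2^(s+1) := by
            have hv := F1 (s+1+1) (by omega) (by omega)
            rw [show s+1+1-1 = s+1 from by omega] at hv; exact hv
          have v3 : H (s+1) = 2^s := by
            have hv := F1 (s+1) (by omega) (by omega)
            rw [show s+1-1 = s from by omega] at hv; exact hv
          simp only [auxC, v1, v2, v3]
          push_cast
          have e1 : (2:ℤ)^(s+1+k) = 2^(k+1) * 2^s := by rw [← pow_add]; congr 1; omega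
          have e2 : (2:ℤ)^(s+1) = 2 * 2^s := by rw [pow_succ]; ring
          have hp : (0:ℤ) < 2^s := by positivity
          rw [e1, e2]
          have eg : (2:ℤ)^(k+1) * 2^s - ((2:ℤ)^(k+1)-1) * (2*2^s - 2^s) = 2^s := by ring
          linarith [eg, hp]
        · intro h2 _; exact absurd h2 (by omega)
      · by_cases hc2 : m ≤ g
        · -- ramp regime
          constructor
          · obtain ⟨s, hs⟩ : ∃ s, g = k + s := ⟨g - k, by omega⟩
            subst hs
            rw [show k+s-k = s from by omega] at hk2
            obtain ⟨u, rfl⟩ : ∃ u, m = s+1+u := ⟨m-s-1, by omega⟩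
            have hu : u + 1 ≤ k := by omega
            have hub : u+1 ≤ 2^(k+s+1) := by
              have := Nat.lt_two_pow_self (n := (k+s+1)); omega
            have v1 : H (s+1+u+k+1) = 2^u * (2^(k+s+1) - (u+1)) := by
              have hv := F2 (u+1) (by omega) (by omega)
              rw [show k+s+1+(u+1) = s+1+u+k+1 from by omega,
                  show u+1-1 = u from by omega] at hv
              exact hv
            have v2 : H (s+1+u+1) = 2^(s+1+u) := by
              have hv := F1 (s+1+u+1) (by omega) (by omega)
              rw [show s+1+u+1-1 = s+1+u from by omega] at hv; exact hv
            have v3 : H (s+1+u) = 2^(s+u) := by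
              have hv := F1 (s+1+u) (by omega) (by omega)
              rw [show s+1+u-1 = s+u from by omega] at hv; exact hv
            simp only [auxC, v1, v2, v3]
            push_cast [Nat.cast_sub hub]
            have e1 : (2:ℤ)^(k+s+1) = 2^(k+1) * 2^s := by rw [← pow_add]; congr 1; omega
            have e2 : (2:ℤ)^(s+1+u) = 2 * (2^s * 2^u) := by
              rw [show s+1+u = s+u+1 from by omega, pow_succ, pow_add]; ring
            have e3 : (2:ℤ)^(s+u) = 2^s * 2^u := by rw [pow_add]
            have hksZ : (k:ℤ) ≤ 2^s := by exact_mod_cast hk2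
            have hup : (0:ℤ) < 2^u := by positivity
            have huk : (u:ℤ) + 1 ≤ k := by exact_mod_cast hu
            rw [e1, e2, e3]
            have eg : (2:ℤ)^u * ((2:ℤ)^(k+1) * 2^s - ((u:ℤ)+1)) - ((2:ℤ)^(k+1)-1) * (2*(2^s*2^u) - 2^s*2^u)
                = ((2:ℤ)^s - ((u:ℤ)+1)) * 2^u := by ring
            have hb : 0 ≤ ((2:ℤ)^s - ((u:ℤ)+1)) * 2^u :=
              mul_nonneg (by linarith [hksZ, huk]) (le_of_lt hup)
            linarith [eg, hb]
          · intro h2 _; exact absurd h2 (by omega)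
        · by_cases hc3 : m = g + 1
          · subst hc3
            constructor
            · have hpowk : 2 * 2^(k-1) = 2^k := by
                have hps := pow_succ 2 (k-1)
                rw [show k-1+1 = k from by omega] at hps
                omega
              have hF2k := F2 k (by omega) le_rfl
              rw [show g+1+k = g+k+1 from by omega] at hF2k
              have n2 : 2 * H (g+k+1) = 2^k * (2^(g+1) - k) := by
                rw [hF2k, ← mul_assoc, hpowk]
              have nval : H (g+k+2) + 2^k + 1 = 2^k * (2^(g+1) - k) + N := by omega
              have hkle : k ≤ 2^(g+1) := by
                have := Nat.lt_two_pow_self (n := (g+1)); omega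
              zify [hkle] at nval
              have v2 : H (g+1+1) = 2^(g+1) - 1 := by
                have hv := F2 1 le_rfl (by omega)
                simpa using hv
              have h1le : 1 ≤ 2^(g+1) := Nat.one_le_two_pow
              zify [h1le] at v2
              have v3 : (H (g+1) : ℤ) = 2^g := by
                have hv := F1 (g+1) le_rfl (by omega)
                rw [show g+1-1 = g from by omega] at hv
                exact_mod_cast congrArg (Nat.cast : ℕ → ℤ) hv
              simp only [auxC]
              rw [show g+1+k+1 = g+k+2 from by omega, v2, v3]
              have eP : (2:ℤ)^(g+1) = 2*2^g := by rw [pow_succ]; ring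
              have eK : (2:ℤ)^(k+1) = 2*2^k := by rw [pow_succ]; ring
              have hkkZ : (k:ℤ)*2^k ≤ 2^g := by
                have hnn : k * 2^k ≤ 2^g := by
                  calc k * 2^k ≤ 2^(g-k) * 2^k := Nat.mul_le_mul_right _ hk2
                  _ = 2^g := by rw [← pow_add]; congr 1; omega
                exact_mod_cast hnn
              have h2k : (1:ℤ) ≤ 2^k := by exact_mod_cast (Nat.one_le_two_pow : 1 ≤ 2^k)
              have hNz : (1:ℤ) ≤ (N:ℤ) := by exact_mod_cast hN
              have eCval : (H (g+k+2) : ℤ) - (2^(k+1)-1) * ((2^(g+1)-1) - 2^g)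
                  = 2^g - (k:ℤ)*2^k + 2^k + (N:ℤ) - 2 := by
                linear_combination nval + (1 + (2:ℤ)^k - 2^(k+1)) * eP + (1 + (2:ℤ)^g) * eK
              linarith [eCval, hkkZ, h2k, hNz]
            · intro h2 _; exact absurd h2 (by omega)
          · by_cases hc4 : m ≤ g + k
            · -- middle regime with identity
              have hmid := Cmid m (by omega) hc4
              have hsum0 : 0 ≤ ∑ j ∈ Finset.Icc 1 g, auxC k H (m-j) := by
                apply Finset.sum_nonneg
                intro j hj
                simp only [Finset.mem_Icc] at hj
                exact (ih (m-j) (by omega) (by omega)).1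
              have hH0 : (0:ℤ) ≤ (N:ℤ) * (H (m-g):ℤ) := by positivity
              constructor
              · rw [hmid]; linarith
              · intro _ _; rw [hmid]; linarith
            · by_cases hc5 : m = g + k + 1
              · subst hc5
                constructor
                · rw [CL]
                  have hsub : Finset.Icc 1 (k-1) ⊆ Finset.Icc 1 g :=
                    Finset.Icc_subset_Icc_right (by omega)
                  have hmono2 : ∑ j ∈ Finset.Icc 1 (k-1), auxC k H (g+k+1-j)
                      ≤ ∑ j ∈ Finset.Icc 1 g, auxC k H (g+k+1-j) := by
                    apply Finset.sum_le_sum_of_subset_of_nonneg hsub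
                    intro j hj _
                    simp only [Finset.mem_Icc] at hj
                    exact (ih (g+k+1-j) (by omega) (by omega)).1
                  have hterm : ∑ j ∈ Finset.Icc 1 (k-1), (N:ℤ) * (H (g+k+1-j-g) : ℤ)
                      ≤ ∑ j ∈ Finset.Icc 1 (k-1), auxC k H (g+k+1-j) := by
                    apply Finset.sum_le_sum
                    intro j hj
                    simp only [Finset.mem_Icc] at hj
                    exact (ih (g+k+1-j) (by omega) (by omega)).2 (by omega) (by omega)
                  have hval : ∑ j ∈ Finset.Icc 1 (k-1), (N:ℤ) * (H (g+k+1-j-g) : ℤ)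
                      = (N:ℤ) * ((2:ℤ)^k - 2) := by
                    have hre : ∀ j ∈ Finset.Icc 1 (k-1), (N:ℤ) * (H (g+k+1-j-g) : ℤ)
                        = (N:ℤ) * (H (k+1-j) : ℤ) := by
                      intro j hj; simp only [Finset.mem_Icc] at hj
                      rw [show g+k+1-j-g = k+1-j from by omega]
                    rw [Finset.sum_congr rfl hre, ← Finset.mul_sum]
                    have hw := aux_win (fun i => (H i : ℤ)) (k-1) k (by omega)
                    rw [show k-(k-1) = 1 from by omega] at hw
                    rw [hw]
                    have hvn : ∑ i ∈ Finset.Ioc 1 k, H i = 2^k - 2 := by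
                      have hsp := Finset.sum_Ioc_consecutive H (Nat.zero_le 1) (show 1 ≤ k by omega)
                      have h01 : ∑ i ∈ Finset.Ioc 0 1, H i = H 1 := by simp
                      have hkv := SHg k (by omega)
                      have h2l : 2 ≤ 2^k := by
                        calc (2:ℕ) = 2^1 := by norm_num
                        _ ≤ 2^k := Nat.pow_le_pow_right (by norm_num) hk
                      omega
                    have hcast : ∑ i ∈ Finset.Ioc 1 k, (H i:ℤ)
                        = ((∑ i ∈ Finset.Ioc 1 k, H i : ℕ) : ℤ) := by push_cast; ring
                    rw [hcast, hvn]
                    have h2l : 2 ≤ 2^k := by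
                      calc (2:ℕ) = 2^1 := by norm_num
                      _ ≤ 2^k := Nat.pow_le_pow_right (by norm_num) hk
                    rw [Nat.cast_sub h2l]
                    push_cast; ring
                  have haux : (N:ℤ) * 2^(k+1) = 2 * ((N:ℤ) * 2^k) := by rw [pow_succ]; ring
                  have h2k : (1:ℤ) ≤ 2^k := by exact_mod_cast (Nat.one_le_two_pow : 1 ≤ 2^k)
                  linarith [hmono2, hterm, hval, hNM, haux, h2k]
                · intro _ h3; exact absurd h3 (by omega)
              · -- full recurrence regime
                have hid := Cfull m (by omega)
                have hs0 : 0 ≤ ∑ j ∈ Finset.Icc 1 g, auxC k H (m-j) := by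
                  apply Finset.sum_nonneg
                  intro j hj
                  simp only [Finset.mem_Icc] at hj
                  exact (ih (m-j) (by omega) (by omega)).1
                have hc0 : 0 ≤ auxC k H (m-(g+k+1)) :=
                  (ih (m-(g+k+1)) (by omega) (by omega)).1
                have hc0' : 0 ≤ (N:ℤ) * auxC k H (m-(g+k+1)) :=
                  mul_nonneg (by positivity) hc0
                constructor
                · rw [hid]; linarith
                · intro _ h3; exact absurd h3 (by omega)

  -- telescoped partial-sum bound:  (2^(k+1)-1) * H m ≤ ∑_{i ≤ m+k} H i
  have Ann : (N:ℤ) ≤ 2^(k+1)-1 → ∀ m, 1 ≤ m →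
      (1:ℤ) ≤ 1 + (∑ i ∈ Finset.Ioc 0 (m+k), (H i:ℤ)) - (2^(k+1)-1) * (H m:ℤ) := by
    intro hNM m hm
    induction m, hm using Nat.le_induction with
    | base =>
      have hS := SHg (1+k) (by omega)
      have hcast : ∑ i ∈ Finset.Ioc 0 (1+k), (H i:ℤ)
          = ((∑ i ∈ Finset.Ioc 0 (1+k), H i : ℕ) : ℤ) := by push_cast; ring
      have h1l : 1 ≤ 2^(1+k) := Nat.one_le_two_pow
      rw [hcast, hS, Nat.cast_sub h1l, h1]
      have e : (2:ℤ)^(1+k) = 2^(k+1) := by congr 1; omega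
      push_cast
      rw [e]
      linarith
    | succ m hm ihm =>
      have hsucc : ∑ i ∈ Finset.Ioc 0 (m+1+k), (H i:ℤ)
          = (∑ i ∈ Finset.Ioc 0 (m+k), (H i:ℤ)) + (H (m+k+1):ℤ) := by
        rw [show m+1+k = m+k+1 from by omega]
        exact Finset.sum_Ioc_succ_top (Nat.zero_le _) _
      have hcm := (Cnn hNM m (by omega)).1
      simp only [auxC] at hcm
      rw [hsucc]
      linarith [ihm, hcm]
  -- Brown's criterion inequality holds
  have brownN : N ≤ 2^(k+1)-1 → ∀ n, 1 ≤ n → H (n+1) ≤ 1 + ∑ i ∈ Finset.Icc 1 n, H i := by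
    intro hNle n hn
    have hNM : (N:ℤ) ≤ 2^(k+1)-1 := by
      have h1l : 1 ≤ 2^(k+1) := Nat.one_le_two_pow
      have : ((N:ℕ):ℤ) ≤ ((2^(k+1)-1 : ℕ) : ℤ) := by exact_mod_cast hNle
      rw [Nat.cast_sub h1l] at this
      push_cast at this
      exact this
    rw [(show ∀ X : ℕ, Finset.Icc 1 X = Finset.Ioc 0 X from fun X => by rw [← Finset.Icc_add_one_left_eq_Ioc]; rfl)]
    have hz : (H (n+1):ℤ) ≤ 1 + ∑ i ∈ Finset.Ioc 0 n, (H i:ℤ) := by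
      by_cases hng : n ≤ g
      · rw [csum1 n hn hng]; push_cast
        have : ∑ i ∈ Finset.Ioc 0 n, (H i:ℤ) = ∑ i ∈ Finset.Ioc 0 n, (H i:ℤ) := rfl
        linarith [this]
      · by_cases hnk : n < g+k+1
        · rw [zc2 n (by omega) hnk]
          have hsub : Finset.Ioc (n-g) n ⊆ Finset.Ioc 0 n := by
            apply Finset.Ioc_subset_Ioc_left; omega
          have := Finset.sum_le_sum_of_subset_of_nonneg hsub
            (fun i _ _ => by positivity : ∀ i ∈ Finset.Ioc 0 n, i ∉ Finset.Ioc (n-g) n → (0:ℤ) ≤ (H i:ℤ))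
          linarith
        · rw [zc3 n (by omega)]
          have ha := Ann hNM (n-g-k) (by omega)
          rw [show n-g-k+k = n-g from by omega] at ha
          have hNH : (N:ℤ) * (H (n-g-k):ℤ) ≤ (2^(k+1)-1) * (H (n-g-k):ℤ) :=
            mul_le_mul_of_nonneg_right hNM (by positivity)
          have hsp := Finset.sum_Ioc_consecutive (fun i => (H i:ℤ)) (Nat.zero_le (n-g)) (show n-g ≤ n by omega)
          linarith
    have hfin : ((H (n+1) : ℕ) : ℤ) ≤ ((1 + ∑ i ∈ Finset.Ioc 0 n, H i : ℕ) : ℤ) := by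
      push_cast
      push_cast at hz
      linarith
    exact_mod_cast hfin
  -- incompleteness when N ≥ 2^(k+1)
  have hbig : 2^(k+1) ≤ N → ¬ SeqComplete H := by
    intro hNbig
    apply brown_incomplete H monole (g+g+2) (by omega)
    rw [(show ∀ X : ℕ, Finset.Icc 1 X = Finset.Ioc 0 X from fun X => by rw [← Finset.Icc_add_one_left_eq_Ioc]; rfl)]
    have e1 := csum3 (g+g+2) (by omega)
    rw [show g+g+2-g-k = g-k+2 from by omega, show g+g+2-g = g+2 from by omega] at e1
    have hv : H (g-k+2) = 2^(g-k+1) := by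
      have hv' := F1 (g-k+2) (by omega) (by omega)
      rw [show g-k+2-1 = g-k+1 from by omega] at hv'
      exact hv'
    rw [hv] at e1
    have hsp := Finset.sum_Ioc_consecutive H (Nat.zero_le (g+2)) (show g+2 ≤ g+g+2 by omega)
    have hS1 := SHg (g+1) le_rfl
    have hS2 : ∑ i ∈ Finset.Ioc 0 (g+2), H i = ∑ i ∈ Finset.Ioc 0 (g+1), H i + H (g+2) := by
      rw [show g+2 = (g+1)+1 from by omega]
      exact Finset.sum_Ioc_succ_top (Nat.zero_le _) _
    have hH2 : H (g+2) = 2^(g+1) - 1 := by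
      have hv' := F2 1 le_rfl (by omega)
      rw [show g+1+1 = g+2 from by omega] at hv'
      simpa using hv'
    have hmul : 2^(k+1) * 2^(g-k+1) ≤ N * 2^(g-k+1) := Nat.mul_le_mul_right _ hNbig
    have hpows : 2^(k+1) * 2^(g-k+1) = 2^(g+2) := by rw [← pow_add]; congr 1; omega
    have hp1 : 1 ≤ 2^(g+1) := Nat.one_le_two_pow
    have hp2 : 2^(g+2) = 2 * 2^(g+1) := by rw [pow_succ]; ring
    -- goal : 1 + ∑_{Ioc 0 (g+g+2)} H < H (g+g+2+1)
    rw [show g+g+2+1 = g+g+2+1 from rfl]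
    omega
  constructor
  · intro hcomp
    refine ⟨hN, ?_⟩
    by_contra hcon
    exact hbig (by omega) hcomp
  · rintro ⟨-, hNle⟩
    exact brown_complete H h1 hposH (brownN hNle)
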